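/- Adding one strip of length 1 and one strip of length 2 to any misère Partizan Kayles position consisting of k strips of length 1 and j strips of length 2 does not change its misère outcome: o⁻((k+1)S₁ + (j+1)S₂) = o⁻(kS₁ + jS₂) for all natural numbers k, j. -/
import Mathlib


/-- Add a strip of length `k` to a position (strips of length 0 are discarded). -/
def addStrip (m : Multiset ℕ) (k : ℕ) : Multiset ℕ := if k = 0 then m else k ::ₘ m

/-- Left removes one square from a strip of length `n ≥ 1`, leaving strips `i` and `n-1-i`. -/
def LeftMove (G G' : Multiset ℕ) : Prop :=
  ∃ n ∈ G, ∃ i, i + 1 ≤ n ∧ G' = addStrip (addStrip (G.erase n) i) (n - 1 - i)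

/-- Right removes two adjacent squares from a strip of length `n ≥ 2`, leaving `i` and `n-2-i`. -/
def RightMove (G G' : Multiset ℕ) : Prop :=
  ∃ n ∈ G, ∃ i, i + 2 ≤ n ∧ G' = addStrip (addStrip (G.erase n) i) (n - 2 - i)

mutual
  /-- Misère play: Left, to move, wins (a player unable to move wins). -/
  inductive LeftWinsMover : Multiset ℕ → Prop
    | cannot (G : Multiset ℕ) : (¬ ∃ G', LeftMove G G') → LeftWinsMover G
    | move (G G' : Multiset ℕ) : LeftMove G G' → LeftWinsWaiter G' → LeftWinsMover G
  /-- Misère play: Left wins with Right to move. -/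
  inductive LeftWinsWaiter : Multiset ℕ → Prop
    | intro (G : Multiset ℕ) : (∃ G', RightMove G G') →
        (∀ G', RightMove G G' → LeftWinsMover G') → LeftWinsWaiter G
end

inductive Outcome | L | N | P | R
  deriving DecidableEq

open Classical in
/-- The misère outcome `o⁻(G)`. -/
noncomputable def outcome (G : Multiset ℕ) : Outcome :=
  if LeftWinsMover G then (if LeftWinsWaiter G then Outcome.L else Outcome.N)
  else (if LeftWinsWaiter G then Outcome.P else Outcome.R)

/-- The partial order on outcomes: `L` greatest, `R` least, `N` and `P` incomparable. -/
def Outcome.le (a b : Outcome) : Prop := a = b ∨ a = Outcome.R ∨ b = Outcome.L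

/-- `pos k j` is the position `kS₁ + jS₂`. -/
def pos (k j : ℕ) : Multiset ℕ := Multiset.replicate k 1 + Multiset.replicate j 2


lemma pos_succ_left (k j : ℕ) : pos (k + 1) j = 1 ::ₘ pos k j := by
  simp [pos, Multiset.replicate_succ, Multiset.cons_add]

lemma pos_succ_right (k j : ℕ) : pos k (j + 1) = 2 ::ₘ pos k j := by
  simp [pos, Multiset.replicate_succ, Multiset.add_cons]

lemma mem_pos {n k j : ℕ} : n ∈ pos k j ↔ (n = 1 ∧ 0 < k) ∨ (n = 2 ∧ 0 < j) := by
  simp only [pos, Multiset.mem_add, Multiset.mem_replicate]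
  omega

lemma addStrip_zero (m : Multiset ℕ) : addStrip m 0 = m := by simp [addStrip]

lemma addStrip_one (m : Multiset ℕ) : addStrip m 1 = 1 ::ₘ m := by simp [addStrip]

lemma leftMove_pos_iff {k j : ℕ} {G' : Multiset ℕ} :
    LeftMove (pos k j) G' ↔
      (1 ≤ k ∧ G' = pos (k - 1) j) ∨ (1 ≤ j ∧ G' = pos (k + 1) (j - 1)) := by
  constructor
  · rintro ⟨n, hn, i, hi, rfl⟩
    rcases mem_pos.mp hn with ⟨rfl, hk⟩ | ⟨rfl, hj⟩
    · left
      refine ⟨hk, ?_⟩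
      obtain ⟨k', rfl⟩ : ∃ k', k = k' + 1 := ⟨k - 1, by omega⟩
      have hi0 : i = 0 := by omega
      subst hi0
      simp [pos_succ_left, addStrip_zero]
    · right
      refine ⟨hj, ?_⟩
      obtain ⟨j', rfl⟩ : ∃ j', j = j' + 1 := ⟨j - 1, by omega⟩
      have herase : (pos k (j' + 1)).erase 2 = pos k j' := by
        rw [pos_succ_right, Multiset.erase_cons_head]
      obtain rfl | rfl : i = 0 ∨ i = 1 := by omega
      · rw [herase, addStrip_zero, addStrip_one]
        simp [pos_succ_left]
      · rw [herase, addStrip_one, addStrip_zero]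
        simp [pos_succ_left]
  · rintro (⟨hk, rfl⟩ | ⟨hj, rfl⟩)
    · obtain ⟨k', rfl⟩ : ∃ k', k = k' + 1 := ⟨k - 1, by omega⟩
      refine ⟨1, mem_pos.mpr (Or.inl ⟨rfl, hk⟩), 0, by omega, ?_⟩
      rw [pos_succ_left, Multiset.erase_cons_head]
      simp [addStrip_zero]
    · obtain ⟨j', rfl⟩ : ∃ j', j = j' + 1 := ⟨j - 1, by omega⟩
      refine ⟨2, mem_pos.mpr (Or.inr ⟨rfl, hj⟩), 1, by omega, ?_⟩
      rw [pos_succ_right, Multiset.erase_cons_head]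
      simp [addStrip_one, addStrip_zero, pos_succ_left]

lemma rightMove_pos_iff {k j : ℕ} {G' : Multiset ℕ} :
    RightMove (pos k j) G' ↔ 1 ≤ j ∧ G' = pos k (j - 1) := by
  constructor
  · rintro ⟨n, hn, i, hi, rfl⟩
    rcases mem_pos.mp hn with ⟨rfl, hk⟩ | ⟨rfl, hj⟩
    · omega
    · refine ⟨hj, ?_⟩
      obtain ⟨j', rfl⟩ : ∃ j', j = j' + 1 := ⟨j - 1, by omega⟩
      have hi0 : i = 0 := by omega
      subst hi0
      rw [pos_succ_right, Multiset.erase_cons_head]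
      simp [addStrip_zero]
  · rintro ⟨hj, rfl⟩
    obtain ⟨j', rfl⟩ : ∃ j', j = j' + 1 := ⟨j - 1, by omega⟩
    refine ⟨2, mem_pos.mpr (Or.inr ⟨rfl, hj⟩), 0, by omega, ?_⟩
    rw [pos_succ_right, Multiset.erase_cons_head]
    simp [addStrip_zero]

lemma kayles_main : ∀ N k j, k + 2 * j ≤ N →
    (LeftWinsMover (pos k j) ↔ (k ≤ j ∧ (j - k) % 3 = 0)) ∧
    (LeftWinsWaiter (pos k j) ↔ (k + 1 ≤ j ∧ (j - k - 1) % 3 = 0)) := by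
  intro N
  induction N using Nat.strong_induction_on with
  | _ N ih =>
    intro k j hN
    constructor
    · constructor
      · intro hM
        cases hM with
        | cannot G hno =>
          by_contra h
          apply hno
          rcases Nat.eq_zero_or_pos k with hk | hk
          · subst hk
            rcases Nat.eq_zero_or_pos j with hj | hj
            · subst hj; exact absurd ⟨le_rfl, rfl⟩ h
            · exact ⟨pos 1 (j - 1), leftMove_pos_iff.mpr (Or.inr ⟨hj, rfl⟩)⟩
          · exact ⟨pos (k - 1) j, leftMove_pos_iff.mpr (Or.inl ⟨hk, rfl⟩)⟩
        | move G G' hmv hW =>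
          rcases leftMove_pos_iff.mp hmv with ⟨hk, rfl⟩ | ⟨hj, rfl⟩
          · have := ((ih (N - 1) (by omega) (k - 1) j (by omega)).2).mp hW
            omega
          · have := ((ih (N - 1) (by omega) (k + 1) (j - 1) (by omega)).2).mp hW
            omega
      · rintro ⟨hle, hmod⟩
        rcases Nat.eq_zero_or_pos k with hk | hk
        · subst hk
          rcases Nat.eq_zero_or_pos j with hj | hj
          · subst hj
            apply LeftWinsMover.cannot
            rintro ⟨G', hG'⟩
            rcases leftMove_pos_iff.mp hG' with ⟨h, _⟩ | ⟨h, _⟩ <;> omega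
          · have hj3 : 3 ≤ j := by omega
            refine LeftWinsMover.move _ (pos 1 (j - 1))
              (leftMove_pos_iff.mpr (Or.inr ⟨hj, rfl⟩)) ?_
            exact ((ih (N - 1) (by omega) 1 (j - 1) (by omega)).2).mpr (by omega)
        · refine LeftWinsMover.move _ (pos (k - 1) j)
            (leftMove_pos_iff.mpr (Or.inl ⟨hk, rfl⟩)) ?_
          exact ((ih (N - 1) (by omega) (k - 1) j (by omega)).2).mpr (by omega)
    · constructor
      · intro hW
        cases hW with
        | intro G hex hall =>
          obtain ⟨G', hR⟩ := hex
          have hj : 1 ≤ j := (rightMove_pos_iff.mp hR).1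
          have hM := hall (pos k (j - 1)) (rightMove_pos_iff.mpr ⟨hj, rfl⟩)
          have := ((ih (N - 1) (by omega) k (j - 1) (by omega)).1).mp hM
          omega
      · rintro ⟨h1, h2⟩
        refine LeftWinsWaiter.intro _ ⟨pos k (j - 1), rightMove_pos_iff.mpr ⟨by omega, rfl⟩⟩ ?_
        intro G' hR
        obtain ⟨hj, rfl⟩ := rightMove_pos_iff.mp hR
        exact ((ih (N - 1) (by omega) k (j - 1) (by omega)).1).mpr (by omega)

theorem kayles_add_one_one_two (k j : ℕ) :
    outcome (pos (k + 1) (j + 1)) = outcome (pos k j) := by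
  have h1 := kayles_main ((k+1) + 2*(j+1)) (k+1) (j+1) le_rfl
  have h2 := kayles_main (k + 2*j) k j le_rfl
  have hM : LeftWinsMover (pos (k + 1) (j + 1)) ↔ LeftWinsMover (pos k j) := by
    rw [h1.1, h2.1]; omega
  have hW : LeftWinsWaiter (pos (k + 1) (j + 1)) ↔ LeftWinsWaiter (pos k j) := by
    rw [h1.2, h2.2]; omega
  classical
  simp only [outcome]
  exact if_congr hM (if_congr hW rfl rfl) (if_congr hW rfl rfl)
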